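/- Assume P satisfies a margin condition with radius r_0. Let c ∈ B(M, B r_0/(4√2 M)), i.e., ‖c − c*‖ ≤ B r_0/(4√2 M) for some optimal codebook c* ∈ M. If c satisfies the centroid condition (each cell of a Voronoi partition of c has positive P-mass and c_i equals the conditional expectation of P on the i-th cell), then c ∈ M. -/

import Mathlib

open MeasureTheory Metric

noncomputable section

variable {H : Type*} [NormedAddCommGroup H] [InnerProductSpace ℝ H] [MeasurableSpace H]

/-- `qgamma k c x = min_j ‖x - c j‖²`. -/
def qgamma (k : ℕ) (c : Fin k → H) (x : H) : ℝ := ⨅ j : Fin k, ‖x - c j‖ ^ 2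

/-- distortion (risk) of a codebook. -/
def qrisk (k : ℕ) (P : Measure H) (c : Fin k → H) : ℝ := ∫ x, qgamma k c x ∂P

/-- the set of optimal codebooks. -/
def qopt (k : ℕ) (P : Measure H) : Set (Fin k → H) :=
  {c | ∀ c' : Fin k → H, qrisk k P c ≤ qrisk k P c'}

/-- the `i`-th (closed) Voronoi cell of the codebook `c`. -/
def vcell (k : ℕ) (c : Fin k → H) (i : Fin k) : Set H :=
  {x | ∀ j : Fin k, ‖x - c i‖ ≤ ‖x - c j‖}

/-- `B`, the minimal separation between code points of optimal codebooks. -/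
def qB (k : ℕ) (P : Measure H) : ℝ :=
  sInf {b | ∃ c ∈ qopt k P, ∃ i j : Fin k, i ≠ j ∧ b = ‖c i - c j‖}

/-- `p_min`, the minimal mass of a Voronoi cell of an optimal codebook. -/
def qpmin (k : ℕ) (P : Measure H) : ℝ :=
  sInf {p | ∃ c ∈ qopt k P, ∃ i : Fin k, p = (P (vcell k c i)).toReal}

/-- `N_{c*}`, the union of the boundaries between Voronoi cells. -/
def nbd (k : ℕ) (c : Fin k → H) : Set H :=
  ⋃ (i : Fin k) (j : Fin k) (_ : i ≠ j), vcell k c i ∩ vcell k c j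

/-- the weight function `p(t)`, the maximal mass of the closed `t`-neighborhood
of `N_{c*}` over optimal codebooks `c*`. -/
def pweight (k : ℕ) (P : Measure H) (t : ℝ) : ℝ :=
  sSup {p | ∃ c ∈ qopt k P, p = (P (cthickening t (nbd k c))).toReal}

/-- `P` is `M`-bounded: its support is contained in the closed ball `B(0,M)`. -/
def mbounded (P : Measure H) (M : ℝ) : Prop := P (closedBall (0 : H) M)ᶜ = 0

/-- the support of `P` contains more than `k` points. -/
def suppGT (P : Measure H) (k : ℕ) : Prop :=
  ∀ S : Finset H, S.card ≤ k → P ((S : Set H)ᶜ) ≠ 0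

/-- the margin condition with radius `r0`. -/
def margin (k : ℕ) (P : Measure H) (M r0 : ℝ) : Prop :=
  0 < r0 ∧ mbounded P M ∧
    ∀ t : ℝ, 0 ≤ t → t ≤ r0 → pweight k P t ≤ qB k P * qpmin k P * t / (128 * M ^ 2)

set_option linter.unusedSectionVars false

open scoped RealInnerProductSpace ENNReal NNReal

lemma bdd_normsq {ι : Type*} (g : ι → H) (x : H) :
    BddBelow (Set.range fun l : ι => ‖x - g l‖ ^ 2) := by
  refine ⟨0, ?_⟩
  rintro y ⟨l, rfl⟩
  positivity

lemma qgamma_le (k : ℕ) (c : Fin k → H) (x : H) (j : Fin k) :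
    qgamma k c x ≤ ‖x - c j‖ ^ 2 := ciInf_le (bdd_normsq c x) j

lemma qgamma_nonneg (k : ℕ) (c : Fin k → H) (x : H) : 0 ≤ qgamma k c x :=
  Real.iInf_nonneg fun _ => by positivity

lemma qgamma_exists {k : ℕ} [Nonempty (Fin k)] (c : Fin k → H) (x : H) :
    ∃ j, (∀ l, ‖x - c j‖ ≤ ‖x - c l‖) ∧ qgamma k c x = ‖x - c j‖ ^ 2 := by
  obtain ⟨j, -, hj⟩ := Finset.exists_min_image Finset.univ (fun l => ‖x - c l‖) ⟨Classical.arbitrary _, Finset.mem_univ _⟩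
  refine ⟨j, fun l => hj l (Finset.mem_univ l), le_antisymm (qgamma_le k c x j) ?_⟩
  refine le_ciInf fun l => ?_
  exact pow_le_pow_left₀ (norm_nonneg _) (hj l (Finset.mem_univ l)) 2

lemma cont_iInf_normsq {ι : Type*} [Fintype ι] [Nonempty ι] (g : ι → H) :
    Continuous fun x : H => ⨅ i, ‖x - g i‖ ^ 2 := by
  have h : (fun x : H => ⨅ i, ‖x - g i‖ ^ 2)
      = fun x => Finset.univ.inf' Finset.univ_nonempty (fun i => ‖x - g i‖ ^ 2) := by
    ext x
    rw [Finset.inf'_univ_eq_ciInf]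
  rw [h]
  exact Continuous.finset_inf'_apply _ fun i _ =>
    ((continuous_id.sub continuous_const).norm.pow 2)

lemma qgamma_cont (k : ℕ) [Nonempty (Fin k)] (c : Fin k → H) : Continuous (qgamma k c) :=
  cont_iInf_normsq c

def projBall (M : ℝ) (y : H) : H := if ‖y‖ ≤ M then y else (M / ‖y‖) • y

lemma norm_projBall_le {M : ℝ} (hM : 0 ≤ M) (y : H) : ‖projBall M y‖ ≤ M := by
  unfold projBall
  split
  · assumption
  · rename_i h
    push_neg at h
    have hy : (0:ℝ) < ‖y‖ := lt_of_le_of_lt hM h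
    rw [norm_smul, Real.norm_eq_abs, abs_div, abs_of_nonneg hM, abs_of_nonneg (norm_nonneg y),
      div_mul_cancel₀ _ (ne_of_gt hy)]

lemma norm_sub_projBall_le {M : ℝ} (x y : H) (hx : ‖x‖ ≤ M) :
    ‖x - projBall M y‖ ≤ ‖x - y‖ := by
  unfold projBall
  split
  · exact le_rfl
  · rename_i h
    push_neg at h
    have hM : (0:ℝ) ≤ M := le_trans (norm_nonneg x) hx
    have hy : (0:ℝ) < ‖y‖ := lt_of_le_of_lt hM h
    set r : ℝ := M / ‖y‖ with hr
    have hr0 : 0 ≤ r := div_nonneg hM (le_of_lt hy)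
    have hr1 : r ≤ 1 := by
      rw [hr, div_le_one hy]; exact le_of_lt h
    have hrM : r * ‖y‖ = M := div_mul_cancel₀ _ (ne_of_gt hy)
    have hkey : ‖x - r • y‖ ^ 2 ≤ ‖x - y‖ ^ 2 := by
      rw [norm_sub_sq_real, norm_sub_sq_real, real_inner_smul_right, norm_smul,
        Real.norm_eq_abs, abs_of_nonneg hr0]
      have hxy : (inner ℝ (x) (y) : ℝ) ≤ ‖x‖ * ‖y‖ := real_inner_le_norm x y
      nlinarith [sq_nonneg (‖y‖ - M), norm_nonneg x]
    nlinarith [norm_nonneg (x - r • y), norm_nonneg (x - y)]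

lemma near_nbd {k : ℕ} [Nonempty (Fin k)] (cs : Fin k → H) (x : H) (i j : Fin k) (hij : i ≠ j)
    (hle : ∀ l, ‖x - cs j‖ ≤ ‖x - cs l‖) (hne : cs i ≠ cs j) :
    ∃ z ∈ nbd k cs, ‖x - z‖ ≤ (‖x - cs i‖ ^ 2 - ‖x - cs j‖ ^ 2) / (2 * ‖cs i - cs j‖) := by
  have hD : (0:ℝ) < ‖cs i - cs j‖ := by rwa [norm_pos_iff, sub_ne_zero]
  set u : H := ‖cs i - cs j‖⁻¹ • (cs i - cs j) with hu
  have hun : ‖u‖ = 1 := by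
    rw [hu, norm_smul, Real.norm_eq_abs, abs_of_nonneg (inv_nonneg.2 (le_of_lt hD)),
      inv_mul_cancel₀ (ne_of_gt hD)]
  set Δ : ℝ := ‖x - cs i‖ ^ 2 - ‖x - cs j‖ ^ 2 with hΔ
  have hΔ0 : 0 ≤ Δ := by
    have := pow_le_pow_left₀ (norm_nonneg _) (hle i) 2
    simp only [hΔ]; linarith
  haveI : Nonempty {l : Fin k // l ≠ j} := ⟨⟨i, hij⟩⟩
  set f : ℝ → ℝ := fun τ =>
    ‖(x + τ • u) - cs j‖ ^ 2 - ⨅ l : {l : Fin k // l ≠ j}, ‖(x + τ • u) - cs (l : Fin k)‖ ^ 2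
    with hf
  have hfc : Continuous f := by
    have h2 : Continuous fun τ : ℝ => x + τ • u := by continuity
    have h1 : Continuous fun y : H => ⨅ l : {l : Fin k // l ≠ j}, ‖y - cs (l : Fin k)‖ ^ 2 :=
      cont_iInf_normsq _
    exact ((h2.sub continuous_const).norm.pow 2).sub (h1.comp h2)
  set τs : ℝ := Δ / (2 * ‖cs i - cs j‖) with hτs
  have hτs0 : 0 ≤ τs := div_nonneg hΔ0 (by positivity)
  have hexp : ∀ (τ : ℝ) (a : H), ‖(x + τ • u) - a‖ ^ 2
      = ‖x - a‖ ^ 2 + 2 * (τ * (inner ℝ (x - a) u : ℝ)) + τ ^ 2 := by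
    intro τ a
    have h3 : (x + τ • u) - a = (x - a) + τ • u := by abel
    rw [h3, norm_add_sq_real, real_inner_smul_right, norm_smul, Real.norm_eq_abs, hun,
      mul_one, sq_abs]
  have hinner : (inner ℝ (x - cs i) u : ℝ) - (inner ℝ (x - cs j) u : ℝ) = -‖cs i - cs j‖ := by
    rw [← inner_sub_left]
    have h3 : (x - cs i) - (x - cs j) = -(cs i - cs j) := by abel
    rw [h3, inner_neg_left, hu, real_inner_smul_right, real_inner_self_eq_norm_sq]
    field_simp
  have hf0 : f 0 ≤ 0 := by
    simp only [hf, zero_smul, add_zero]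
    have h1 : ‖x - cs j‖ ^ 2 ≤ ⨅ l : {l : Fin k // l ≠ j}, ‖x - cs (l : Fin k)‖ ^ 2 := by
      refine le_ciInf fun l => ?_
      exact pow_le_pow_left₀ (norm_nonneg _) (hle l) 2
    linarith
  have hfτ : 0 ≤ f τs := by
    have h1 : (⨅ l : {l : Fin k // l ≠ j}, ‖(x + τs • u) - cs (l : Fin k)‖ ^ 2)
        ≤ ‖(x + τs • u) - cs i‖ ^ 2 := ciInf_le (bdd_normsq _ _) (⟨i, hij⟩ : {l : Fin k // l ≠ j})
    have h2 := hexp τs (cs i)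
    have h3 := hexp τs (cs j)
    have h4 : ‖(x + τs • u) - cs i‖ ^ 2 - ‖(x + τs • u) - cs j‖ ^ 2
        = Δ - 2 * τs * ‖cs i - cs j‖ := by
      rw [h2, h3]
      simp only [hΔ]
      nlinarith [hinner]
    have h5 : 2 * τs * ‖cs i - cs j‖ = Δ := by
      rw [hτs]; field_simp
    simp only [hf]
    linarith
  obtain ⟨τ0, hτ0mem, hfτ0⟩ := intermediate_value_Icc hτs0 hfc.continuousOn
    (Set.mem_Icc.mpr ⟨hf0, hfτ⟩)
  set z : H := x + τ0 • u with hz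
  have hiz : ‖z - cs j‖ ^ 2 = ⨅ l : {l : Fin k // l ≠ j}, ‖z - cs (l : Fin k)‖ ^ 2 := by
    have h0 : f τ0 = 0 := hfτ0
    simp only [hf] at h0
    linarith
  obtain ⟨l0, -, hl0⟩ := Finset.exists_min_image Finset.univ
    (fun l : {l : Fin k // l ≠ j} => ‖z - cs (l : Fin k)‖) ⟨⟨i, hij⟩, Finset.mem_univ _⟩
  have hl0min : ‖z - cs (l0 : Fin k)‖ ^ 2
      = ⨅ l : {l : Fin k // l ≠ j}, ‖z - cs (l : Fin k)‖ ^ 2 := by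
    refine le_antisymm (le_ciInf fun l => ?_) (ciInf_le (bdd_normsq _ _) l0)
    exact pow_le_pow_left₀ (norm_nonneg _) (hl0 l (Finset.mem_univ l)) 2
  have hsqe : ∀ a b : H, ‖a‖ ^ 2 ≤ ‖b‖ ^ 2 → ‖a‖ ≤ ‖b‖ := by
    intro a b hab
    nlinarith [norm_nonneg a, norm_nonneg b]
  have hzj : z ∈ vcell k cs j := by
    intro m
    rcases eq_or_ne m j with rfl | hm
    · exact le_rfl
    · refine hsqe _ _ ?_
      rw [hiz]
      exact ciInf_le (bdd_normsq _ _) (⟨m, hm⟩ : {l : Fin k // l ≠ j})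
  have hzl : z ∈ vcell k cs (l0 : Fin k) := by
    intro m
    rcases eq_or_ne m j with rfl | hm
    · exact hsqe _ _ (le_of_eq (by rw [hl0min, ← hiz]))
    · refine hsqe _ _ ?_
      rw [hl0min]
      exact ciInf_le (bdd_normsq _ _) (⟨m, hm⟩ : {l : Fin k // l ≠ j})
  refine ⟨z, ?_, ?_⟩
  · simp only [nbd, Set.mem_iUnion]
    exact ⟨j, l0, Ne.symm l0.2, hzj, hzl⟩
  · have h6 : x - z = -(τ0 • u) := by rw [hz]; abel
    rw [h6, norm_neg, norm_smul, Real.norm_eq_abs, hun, mul_one,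
      abs_of_nonneg hτ0mem.1]
    exact hτ0mem.2

lemma integrable_of_bound {E : Type*} [NormedAddCommGroup E] {P : Measure H}
    [IsFiniteMeasure P] {f : H → E}
    (hf : AEStronglyMeasurable f P) (C : ℝ) (h : ∀ᵐ x ∂P, ‖f x‖ ≤ C) : Integrable f P :=
  Integrable.mono' (integrable_const C) hf h

lemma centroid_id [BorelSpace H] [CompleteSpace H] [SecondCountableTopology H]
    {P : Measure H} [IsFiniteMeasure P] {W : Set H} (b a : H)
    (hint : Integrable (fun x : H => x) (P.restrict W))
    (hsq : Integrable (fun x => ‖x - b‖ ^ 2) (P.restrict W))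
    (hb : ∫ x in W, x ∂P = (P W).toReal • b) :
    ∫ x in W, ‖x - a‖ ^ 2 ∂P = ∫ x in W, ‖x - b‖ ^ 2 ∂P + (P W).toReal * ‖b - a‖ ^ 2 := by
  have hpt : ∀ x : H, ‖x - a‖ ^ 2
      = ‖x - b‖ ^ 2 + (2 * (inner ℝ (x - b) (b - a) : ℝ) + ‖b - a‖ ^ 2) := by
    intro x
    have h1 : x - a = (x - b) + (b - a) := by abel
    rw [h1, norm_add_sq_real]
    ring
  have hsub : Integrable (fun x : H => x - b) (P.restrict W) := hint.sub (integrable_const b)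
  have hint2 : Integrable (fun x => 2 * (inner ℝ (x - b) (b - a) : ℝ) + ‖b - a‖ ^ 2)
      (P.restrict W) := by
    refine Integrable.add ?_ (integrable_const _)
    exact (hsub.inner_const (b - a)).const_mul 2
  have h2 : ∫ x in W, ‖x - a‖ ^ 2 ∂P
      = ∫ x in W, ‖x - b‖ ^ 2 ∂P
        + ∫ x in W, (2 * (inner ℝ (x - b) (b - a) : ℝ) + ‖b - a‖ ^ 2) ∂P := by
    rw [← integral_add hsq hint2]
    exact integral_congr_ae (Filter.Eventually.of_forall fun x => hpt x)
  have h4 : ∫ x in W, (x - b) ∂P = 0 := by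
    rw [integral_sub hint (integrable_const b), hb, integral_const,
      measureReal_restrict_apply_univ, measureReal_def, sub_self]
  have h3 : ∫ x in W, (inner ℝ (x - b) (b - a) : ℝ) ∂P = 0 := by
    have hc : ∀ x : H, (inner ℝ (x - b) (b - a) : ℝ) = (inner ℝ (b - a) (x - b) : ℝ) :=
      fun x => real_inner_comm _ _
    rw [integral_congr_ae (Filter.Eventually.of_forall hc), integral_inner hsub (b - a), h4,
      inner_zero_right]
  have h5 : ∫ x in W, (2 * (inner ℝ (x - b) (b - a) : ℝ) + ‖b - a‖ ^ 2) ∂P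
      = (P W).toReal * ‖b - a‖ ^ 2 := by
    rw [integral_add ((hsub.inner_const (b - a)).const_mul 2) (integrable_const _),
      integral_const_mul, h3, integral_const, measureReal_restrict_apply_univ, measureReal_def, smul_eq_mul]
    ring
  rw [h2, h5]


set_option maxHeartbeats 2000000 in
/-- Lemma 4.3: a codebook close to the set of optimal codebooks which satisfies
the centroid condition is an optimal codebook. -/
theorem stmt11 [BorelSpace H] [SecondCountableTopology H] [CompleteSpace H]
    (k : ℕ) (hk : 2 ≤ k) (P : Measure H) [IsProbabilityMeasure P]
    (M : ℝ) (hM : 0 < M) (hsupp : suppGT P k) (hne : (qopt k P).Nonempty)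
    (r0 : ℝ) (hmargin : margin k P M r0)
    (c : Fin k → H)
    (hclose : ∃ cs ∈ qopt k P,
      Real.sqrt (∑ i, ‖c i - cs i‖ ^ 2) ≤ qB k P * r0 / (4 * Real.sqrt 2 * M))
    -- the centroid condition for a Voronoi partition of `c`
    (hcentroid : ∃ W : Fin k → Set H,
      (∀ i, MeasurableSet (W i)) ∧
      Pairwise (Function.onFun Disjoint W) ∧
      (⋃ i, W i) = Set.univ ∧
      (∀ i, closure (W i) = vcell k c i) ∧
      (∀ i, P (W i) ≠ 0) ∧
      (∀ i, c i = (P (W i)).toReal⁻¹ • ∫ x in W i, x ∂P)) :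
    c ∈ qopt k P := by
  classical
  obtain ⟨cs, hcs, hclose⟩ := hclose
  obtain ⟨W, hWm, hWd, hWu, hWcl, hWpos, hWcent⟩ := hcentroid
  haveI : Nonempty (Fin k) := ⟨⟨0, by omega⟩⟩
  have hM0 : (0:ℝ) ≤ M := le_of_lt hM
  obtain ⟨hr0, hmb, hmarg⟩ := hmargin
  have hae : ∀ᵐ x ∂P, ‖x‖ ≤ M := by
    rw [ae_iff]
    have hset : {x : H | ¬ ‖x‖ ≤ M} = (closedBall (0:H) M)ᶜ := by
      ext x
      simp [Metric.mem_closedBall, dist_zero_right]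
    rw [hset]
    exact hmb
  have haeW : ∀ s : Set H, ∀ᵐ x ∂P.restrict s, ‖x‖ ≤ M := fun s => ae_restrict_of_ae hae
  have hidint : ∀ s : Set H, Integrable (fun x : H => x) (P.restrict s) := by
    intro s
    refine integrable_of_bound (f := fun x : H => x)
      (continuous_id : Continuous fun x : H => x).aestronglyMeasurable M ?_
    exact haeW s
  have hsqint : ∀ (a : H) (s : Set H), Integrable (fun x => ‖x - a‖ ^ 2) (P.restrict s) := by
    intro a s
    refine integrable_of_bound
      (((continuous_id.sub continuous_const).norm.pow 2).aestronglyMeasurable)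
      ((M + ‖a‖) ^ 2) ?_
    filter_upwards [haeW s] with x hx
    have h1 : ‖x - a‖ ≤ M + ‖a‖ := (norm_sub_le x a).trans (by linarith)
    rw [Real.norm_eq_abs, abs_of_nonneg (by positivity)]
    nlinarith [norm_nonneg (x - a)]
  have hqgint : ∀ g : Fin k → H, Integrable (qgamma k g) P := by
    intro g
    set i0 : Fin k := ⟨0, by omega⟩
    refine integrable_of_bound (qgamma_cont k g).aestronglyMeasurable ((M + ‖g i0‖) ^ 2) ?_
    filter_upwards [hae] with x hx
    rw [Real.norm_eq_abs, abs_of_nonneg (qgamma_nonneg k g x)]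
    refine (qgamma_le k g x i0).trans ?_
    have h1 : ‖x - g i0‖ ≤ M + ‖g i0‖ := (norm_sub_le _ _).trans (by linarith)
    nlinarith [norm_nonneg (x - g i0)]
  have hWfin : ∀ i, (P (W i)).toReal ≠ 0 := fun i =>
    ENNReal.toReal_ne_zero.mpr ⟨hWpos i, measure_ne_top P _⟩
  have hWr : ∀ i, ∫ x in W i, x ∂P = (P (W i)).toReal • c i := by
    intro i
    rw [hWcent i, smul_smul, mul_inv_cancel₀ (hWfin i), one_smul]
  have hcball : ∀ i, ‖c i‖ ≤ M := by
    intro i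
    rw [hWcent i, norm_smul, Real.norm_eq_abs, abs_of_nonneg (by positivity)]
    have h1 : ‖∫ x in W i, x ∂P‖ ≤ M * (P (W i)).toReal := by
      refine (norm_integral_le_integral_norm _).trans ?_
      have h2 : ∫ x in W i, ‖x‖ ∂P ≤ ∫ _ in W i, M ∂P :=
        integral_mono_ae (hidint (W i)).norm (integrable_const M) (haeW (W i))
      rwa [integral_const, measureReal_restrict_apply_univ, measureReal_def, smul_eq_mul, mul_comm] at h2
    have h3 : (0:ℝ) < (P (W i)).toReal :=
      lt_of_le_of_ne ENNReal.toReal_nonneg (Ne.symm (hWfin i))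
    calc (P (W i)).toReal⁻¹ * ‖∫ x in W i, x ∂P‖
        ≤ (P (W i)).toReal⁻¹ * (M * (P (W i)).toReal) :=
          mul_le_mul_of_nonneg_left h1 (by positivity)
      _ = M := by field_simp
  set cs' : Fin k → H := fun i => projBall M (cs i) with hcs'def
  have hcs'ball : ∀ i, ‖cs' i‖ ≤ M := fun i => norm_projBall_le hM0 _
  have hproj : ∀ (x : H), ‖x‖ ≤ M → ∀ i, ‖x - cs' i‖ ≤ ‖x - cs i‖ :=
    fun x hx i => norm_sub_projBall_le x (cs i) hx
  have hcs'opt : cs' ∈ qopt k P := by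
    intro c'
    refine le_trans ?_ (hcs c')
    refine integral_mono_ae (hqgint cs') (hqgint cs) ?_
    filter_upwards [hae] with x hx
    refine le_ciInf fun j => ?_
    exact (qgamma_le k cs' x j).trans (pow_le_pow_left₀ (norm_nonneg _) (hproj x hx j) 2)
  set B := qB k P with hBdef
  have hBle : ∀ i j : Fin k, i ≠ j → B ≤ ‖cs' i - cs' j‖ := by
    intro i j hij
    refine csInf_le ⟨0, ?_⟩ ⟨cs', hcs'opt, i, j, hij, rfl⟩
    rintro b ⟨cc, -, i', j', -, rfl⟩
    exact norm_nonneg _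
  have hi01 : (⟨0, by omega⟩ : Fin k) ≠ (⟨1, by omega⟩ : Fin k) := by
    intro h
    exact absurd (Fin.mk.inj_iff.1 h) (by norm_num)
  have hB0 : 0 ≤ B := by
    refine Real.sInf_nonneg ?_
    rintro b ⟨cc, -, i', j', -, rfl⟩
    exact norm_nonneg _
  have hB2M : B ≤ 2 * M := by
    refine (hBle _ _ hi01).trans ?_
    refine (norm_sub_le _ _).trans ?_
    have := hcs'ball (⟨0, by omega⟩ : Fin k)
    have := hcs'ball (⟨1, by omega⟩ : Fin k)
    linarith
  set pm := qpmin k P with hpmdef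
  have hpmbdd : BddBelow {p | ∃ cc ∈ qopt k P, ∃ i : Fin k, p = (P (vcell k cc i)).toReal} := by
    refine ⟨0, ?_⟩
    rintro p ⟨cc, -, i, rfl⟩
    exact ENNReal.toReal_nonneg
  have hpm0 : 0 ≤ pm := by
    refine Real.sInf_nonneg ?_
    rintro p ⟨cc, -, i, rfl⟩
    exact ENNReal.toReal_nonneg
  have htr1 : ∀ s : Set H, (P s).toReal ≤ 1 := by
    intro s
    have := ENNReal.toReal_mono ENNReal.one_ne_top (prob_le_one (μ := P) (s := s))
    simpa using this
  have hpmvc : ∀ i, pm ≤ (P (vcell k cs' i)).toReal := fun i =>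
    csInf_le hpmbdd ⟨cs', hcs'opt, i, rfl⟩
  have hpm1 : pm ≤ 1 := (hpmvc ⟨0, by omega⟩).trans (htr1 _)
  rcases eq_or_lt_of_le hB0 with hB0' | hBpos
  · -- B = 0 : c = cs
    rw [← hB0', zero_mul, zero_div] at hclose
    have hsum0 : ∑ i, ‖c i - cs i‖ ^ 2 = 0 := by
      have h1 : Real.sqrt (∑ i, ‖c i - cs i‖ ^ 2) = 0 :=
        le_antisymm hclose (Real.sqrt_nonneg _)
      have h2 := Real.sqrt_eq_zero'.1 h1
      have h3 : (0:ℝ) ≤ ∑ i, ‖c i - cs i‖ ^ 2 := by positivity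
      linarith
    have hceq : c = cs := by
      funext i
      have := (Finset.sum_eq_zero_iff_of_nonneg (fun i _ => by positivity)).1 hsum0 i
        (Finset.mem_univ i)
      have h4 : ‖c i - cs i‖ = 0 := by nlinarith [norm_nonneg (c i - cs i)]
      rw [norm_eq_zero, sub_eq_zero] at h4
      exact h4
    rw [hceq]
    exact hcs
  -- main case : 0 < B
  set s2 := Real.sqrt 2 with hs2def
  have hs2sq : s2 ^ 2 = 2 := Real.sq_sqrt (by norm_num)
  have hs2pos : 0 < s2 := Real.sqrt_pos.2 (by norm_num)
  have hs2le2 : s2 ≤ 2 := by nlinarith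
  set d := Real.sqrt (∑ i, ‖c i - cs' i‖ ^ 2) with hddef
  have hd0 : 0 ≤ d := Real.sqrt_nonneg _
  have hdsq : d ^ 2 = ∑ i, ‖c i - cs' i‖ ^ 2 := Real.sq_sqrt (by positivity)
  have hd' : d ≤ B * r0 / (4 * s2 * M) := by
    refine le_trans ?_ hclose
    refine Real.sqrt_le_sqrt (Finset.sum_le_sum fun i _ => ?_)
    exact pow_le_pow_left₀ (norm_nonneg _) (hproj (c i) (hcball i) i) 2
  set t := 4 * s2 * M * d / B with htdef
  have ht0 : 0 ≤ t := by positivity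
  have htB : t * B = 4 * s2 * M * d := by
    rw [htdef]
    field_simp
  have htr0 : t ≤ r0 := by
    rw [htdef, div_le_iff₀ hBpos]
    have h1 : d * (4 * s2 * M) ≤ B * r0 := (le_div_iff₀ (by positivity)).1 hd'
    nlinarith
  set N := nbd k cs' with hNdef
  set T := cthickening t N with hTdef
  have hTm : MeasurableSet T := isClosed_cthickening.measurableSet
  have hpair : ∀ i j : Fin k, i ≠ j → ‖c i - cs' i‖ + ‖c j - cs' j‖ ≤ s2 * d := by
    intro i j hij
    have h1 : ‖c i - cs' i‖ ^ 2 + ‖c j - cs' j‖ ^ 2 ≤ d ^ 2 := by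
      rw [hdsq]
      have h2 : ∑ m ∈ ({i, j} : Finset (Fin k)), ‖c m - cs' m‖ ^ 2
          ≤ ∑ m, ‖c m - cs' m‖ ^ 2 :=
        Finset.sum_le_sum_of_subset_of_nonneg (Finset.subset_univ _)
          (fun m _ _ => by positivity)
      rwa [Finset.sum_pair hij] at h2
    nlinarith [norm_nonneg (c i - cs' i), norm_nonneg (c j - cs' j),
      mul_nonneg (le_of_lt hs2pos) hd0, hs2sq,
      sq_nonneg (‖c i - cs' i‖ - ‖c j - cs' j‖),
      sq_nonneg (‖c i - cs' i‖ + ‖c j - cs' j‖ - s2 * d)]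
  have hvc : ∀ i, ∀ x, x ∈ W i → x ∈ vcell k c i := fun i x hx =>
    (hWcl i) ▸ subset_closure hx
  have hkey : ∀ (i : Fin k) (x : H), ‖x‖ ≤ M → x ∈ W i →
      qgamma k cs' x < ‖x - cs' i‖ ^ 2 →
      x ∈ T ∧ ‖x - cs' i‖ ^ 2 - qgamma k cs' x ≤ 4 * s2 * M * d := by
    intro i x hx hxW hlt
    obtain ⟨j, hjmin, hjeq⟩ := qgamma_exists cs' x
    have hij : i ≠ j := by
      rintro rfl
      rw [hjeq] at hlt
      exact lt_irrefl _ hlt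
    have hgap : ‖x - cs' i‖ - ‖x - cs' j‖ ≤ s2 * d := by
      have h1 : ‖x - c i‖ ≤ ‖x - c j‖ := hvc i x hxW j
      have h2 : ‖x - cs' i‖ ≤ ‖x - c i‖ + ‖c i - cs' i‖ := by
        have h : x - cs' i = (x - c i) + (c i - cs' i) := by abel
        rw [h]
        exact norm_add_le _ _
      have h3 : ‖x - c j‖ ≤ ‖x - cs' j‖ + ‖c j - cs' j‖ := by
        have h : x - c j = (x - cs' j) + -(c j - cs' j) := by abel
        rw [h]
        refine (norm_add_le _ _).trans ?_
        rw [norm_neg]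
      have h4 := hpair i j hij
      linarith
    have hbi : ‖x - cs' i‖ ≤ 2 * M := (norm_sub_le _ _).trans (by linarith [hcs'ball i])
    have hg0 : ‖x - cs' j‖ ≤ ‖x - cs' i‖ := by
      have h5 : ‖x - cs' j‖ ^ 2 < ‖x - cs' i‖ ^ 2 := hjeq ▸ hlt
      nlinarith [norm_nonneg (x - cs' i), norm_nonneg (x - cs' j)]
    have hΔle : ‖x - cs' i‖ ^ 2 - ‖x - cs' j‖ ^ 2 ≤ 4 * s2 * M * d := by
      nlinarith [norm_nonneg (x - cs' j),
        mul_nonneg (mul_nonneg (le_of_lt hs2pos) hd0) (norm_nonneg (x - cs' j))]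
    refine ⟨?_, by rw [hjeq]; exact hΔle⟩
    have hnej : cs' i ≠ cs' j := by
      intro h
      have h6 := hBle i j hij
      rw [h, sub_self, norm_zero] at h6
      exact absurd (lt_of_lt_of_le hBpos h6) (lt_irrefl 0)
    obtain ⟨z, hzN, hzd⟩ := near_nbd cs' x i j hij hjmin hnej
    refine mem_cthickening_of_dist_le x z t N hzN ?_
    rw [dist_eq_norm]
    refine hzd.trans ?_
    have hBn : B ≤ ‖cs' i - cs' j‖ := hBle i j hij
    have hΔ0' : 0 ≤ ‖x - cs' i‖ ^ 2 - ‖x - cs' j‖ ^ 2 := by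
      nlinarith [norm_nonneg (x - cs' i), norm_nonneg (x - cs' j)]
    rw [div_le_iff₀ (by nlinarith : (0:ℝ) < 2 * ‖cs' i - cs' j‖)]
    have h7 : t * B = 4 * s2 * M * d := htB
    nlinarith [mul_le_mul_of_nonneg_left hBn ht0]
  -- case split on size of d
  by_cases hdM : d ≤ 12 * s2 * M
  · -- good case
    have hrisk_c : qrisk k P c = ∑ i, ∫ x in W i, qgamma k c x ∂P := by
      have h := integral_iUnion_fintype hWm hWd (fun i => (hqgint c).integrableOn)
      rw [hWu, setIntegral_univ] at h
      exact h
    have hrisk_cs' : qrisk k P cs' = ∑ i, ∫ x in W i, qgamma k cs' x ∂P := by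
      have h := integral_iUnion_fintype hWm hWd (fun i => (hqgint cs').integrableOn)
      rw [hWu, setIntegral_univ] at h
      exact h
    have h1 : ∀ i, ∫ x in W i, qgamma k c x ∂P ≤ ∫ x in W i, ‖x - c i‖ ^ 2 ∂P := fun i =>
      integral_mono ((hqgint c).integrableOn) (hsqint (c i) (W i)) (fun x => qgamma_le k c x i)
    have h2 : ∀ i, ∫ x in W i, ‖x - c i‖ ^ 2 ∂P
        = ∫ x in W i, ‖x - cs' i‖ ^ 2 ∂P - (P (W i)).toReal * ‖c i - cs' i‖ ^ 2 := by
      intro i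
      have h := centroid_id (P := P) (W := W i) (c i) (cs' i) (hidint (W i))
        (hsqint (c i) (W i)) (hWr i)
      linarith [h]
    have h4 : ∀ i, ∫ x in W i, ‖x - cs' i‖ ^ 2 ∂P - ∫ x in W i, qgamma k cs' x ∂P
        ≤ (4 * s2 * M * d) * (P (T ∩ W i)).toReal := by
      intro i
      have hint1 : Integrable (fun x => ‖x - cs' i‖ ^ 2 - qgamma k cs' x) (P.restrict (W i)) :=
        (hsqint _ _).sub ((hqgint cs').integrableOn)
      rw [← integral_sub (hsqint _ _) ((hqgint cs').integrableOn)]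
      have hintind : Integrable (fun x => (4 * s2 * M * d) * T.indicator (fun _ => (1:ℝ)) x)
          (P.restrict (W i)) := ((integrable_const (1:ℝ)).indicator hTm).const_mul _
      refine le_trans (integral_mono_ae hint1 hintind ?_) ?_
      · have hWae : ∀ᵐ x ∂P.restrict (W i), x ∈ W i :=
          (ae_restrict_iff' (hWm i)).2 (Filter.Eventually.of_forall fun x h => h)
        filter_upwards [haeW (W i), hWae] with x hx hxW
        rcases lt_or_ge (qgamma k cs' x) (‖x - cs' i‖ ^ 2) with hlt | hge
        · obtain ⟨hxT, hb⟩ := hkey i x hx hxW hlt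
          rw [Set.indicator_of_mem hxT, mul_one]
          exact hb
        · have hnn : 0 ≤ (4 * s2 * M * d) * T.indicator (fun _ => (1:ℝ)) x := by
            refine mul_nonneg (by positivity) ?_
            exact Set.indicator_nonneg (fun _ _ => zero_le_one) x
          linarith
      · rw [integral_const_mul, integral_indicator_const _ hTm, measureReal_restrict_apply hTm, measureReal_def,
          smul_eq_mul, mul_one]
    have h5 : ∑ i, (P (T ∩ W i)).toReal = (P T).toReal := by
      have hd2 : Pairwise (Function.onFun Disjoint (fun i => T ∩ W i)) := by
        intro i j hij
        exact (hWd hij).mono Set.inter_subset_right Set.inter_subset_right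
      have hu2 : ⋃ i, T ∩ W i = T := by
        rw [← Set.inter_iUnion, hWu, Set.inter_univ]
      have h := measure_iUnion (μ := P) hd2 (fun i => hTm.inter (hWm i))
      rw [hu2, tsum_fintype] at h
      rw [h, ENNReal.toReal_sum (fun i _ => measure_ne_top P _)]
    set e := (P T).toReal with hedef
    have he0 : 0 ≤ e := ENNReal.toReal_nonneg
    have hpw : e ≤ pweight k P t := by
      refine le_csSup ⟨1, ?_⟩ ⟨cs', hcs'opt, rfl⟩
      rintro p ⟨cc, -, rfl⟩
      exact htr1 _
    have he1 : e ≤ B * pm * t / (128 * M ^ 2) := hpw.trans (hmarg t ht0 htr0)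
    have he2 : e ≤ pm * s2 * d / (32 * M) := by
      have heq : B * pm * t / (128 * M ^ 2) = pm * s2 * d / (32 * M) := by
        rw [htdef]
        field_simp
        ring
      linarith [he1, heq ▸ he1]
    have hmass : ∀ i, pm - e ≤ (P (W i)).toReal := by
      intro i
      have hsubs : vcell k cs' i ⊆ (W i ∪ T) ∪ (closedBall (0:H) M)ᶜ := by
        intro x hxv
        by_cases hxB : ‖x‖ ≤ M
        · have hxU : x ∈ ⋃ l, W l := by
            rw [hWu]
            trivial
          obtain ⟨l, hl⟩ := Set.mem_iUnion.1 hxU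
          rcases eq_or_ne l i with rfl | hli
          · exact Or.inl (Or.inl hl)
          · rcases lt_or_ge (qgamma k cs' x) (‖x - cs' l‖ ^ 2) with hlt | hge
            · exact Or.inl (Or.inr (hkey l x hxB hl hlt).1)
            · have hq1 : ‖x - cs' l‖ ^ 2 ≤ ‖x - cs' i‖ ^ 2 :=
                le_trans hge (qgamma_le k cs' x i)
              have hq2 : ‖x - cs' i‖ ≤ ‖x - cs' l‖ := hxv l
              have hq3 : ‖x - cs' l‖ = ‖x - cs' i‖ := by
                nlinarith [norm_nonneg (x - cs' l), norm_nonneg (x - cs' i)]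
              have hxl : x ∈ vcell k cs' l := by
                intro m
                rw [hq3]
                exact hxv m
              refine Or.inl (Or.inr (self_subset_cthickening N ?_))
              simp only [hNdef, nbd, Set.mem_iUnion]
              exact ⟨i, l, Ne.symm hli, hxv, hxl⟩
        · refine Or.inr ?_
          simp only [Set.mem_compl_iff, Metric.mem_closedBall, dist_zero_right]
          exact hxB
      have hm1 : P (vcell k cs' i) ≤ P (W i) + P T := by
        refine le_trans (measure_mono hsubs) ?_
        refine le_trans (measure_union_le _ _) ?_
        rw [hmb, add_zero]
        exact measure_union_le _ _
      have hm2 : (P (vcell k cs' i)).toReal ≤ (P (W i)).toReal + (P T).toReal := by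
        have h := ENNReal.toReal_mono
          (ENNReal.add_ne_top.2 ⟨measure_ne_top P _, measure_ne_top P _⟩) hm1
        rwa [ENNReal.toReal_add (measure_ne_top P _) (measure_ne_top P _)] at h
      linarith [hpmvc i]
    -- final assembly
    suffices hfin : qrisk k P c ≤ qrisk k P cs' by
      intro c'
      exact hfin.trans (hcs'opt c')
    have hC : qrisk k P c - qrisk k P cs'
        ≤ ∑ i, ((4 * s2 * M * d) * (P (T ∩ W i)).toReal
            - (P (W i)).toReal * ‖c i - cs' i‖ ^ 2) := by
      rw [hrisk_c, hrisk_cs', ← Finset.sum_sub_distrib]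
      refine Finset.sum_le_sum fun i _ => ?_
      have := h4 i
      have := h1 i
      have := h2 i
      linarith
    have hD : ∑ i, ((4 * s2 * M * d) * (P (T ∩ W i)).toReal
        - (P (W i)).toReal * ‖c i - cs' i‖ ^ 2)
        = (4 * s2 * M * d) * e - ∑ i, (P (W i)).toReal * ‖c i - cs' i‖ ^ 2 := by
      rw [Finset.sum_sub_distrib, ← Finset.mul_sum, h5]
    have hE : (pm - e) * d ^ 2 ≤ ∑ i, (P (W i)).toReal * ‖c i - cs' i‖ ^ 2 := by
      rw [hdsq, Finset.mul_sum]
      refine Finset.sum_le_sum fun i _ => ?_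
      exact mul_le_mul_of_nonneg_right (hmass i) (by positivity)
    have hce : (4 * s2 * M * d) * e ≤ pm * d ^ 2 / 4 := by
      have h8 : (4 * s2 * M * d) * e ≤ (4 * s2 * M * d) * (pm * s2 * d / (32 * M)) :=
        mul_le_mul_of_nonneg_left he2 (by positivity)
      have h9 : (4 * s2 * M * d) * (pm * s2 * d / (32 * M)) = pm * d ^ 2 / 4 := by
        calc (4 * s2 * M * d) * (pm * s2 * d / (32 * M))
            = s2 ^ 2 * (M * (pm * d ^ 2) / (8 * M)) := by ring
          _ = 2 * (M * (pm * d ^ 2) / (8 * M)) := by rw [hs2sq]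
          _ = pm * d ^ 2 / 4 := by
              rw [mul_div_assoc', mul_comm M (pm * d ^ 2), mul_div_assoc,
                mul_div_mul_right _ _ (ne_of_gt hM)]
              ring
      linarith
    have hee : e ≤ 3 * pm / 4 := by
      have h10 : e * (32 * M) ≤ pm * s2 * d := (le_div_iff₀ (by positivity)).1 he2
      have h11 : pm * s2 * d ≤ pm * s2 * (12 * s2 * M) :=
        mul_le_mul_of_nonneg_left hdM (mul_nonneg hpm0 hs2pos.le)
      have h11' : pm * s2 * (12 * s2 * M) = 24 * pm * M := by
        have he' : pm * s2 * (12 * s2 * M) = 12 * pm * M * s2 ^ 2 := by ring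
        rw [he', hs2sq]
        ring
      nlinarith [hM]
    rw [hD] at hC
    have h18 : (pm / 4) * d ^ 2 ≤ (pm - e) * d ^ 2 :=
      mul_le_mul_of_nonneg_right (by linarith) (by positivity)
    linarith [hce, hE, hC, h18]
  · -- bad case : contradiction
    exfalso
    push_neg at hdM
    have hle1 : ∀ l, ‖cs' ⟨1, by omega⟩ - cs' ⟨1, by omega⟩‖ ≤ ‖cs' (⟨1, by omega⟩ : Fin k) - cs' l‖ := by
      intro l
      rw [sub_self, norm_zero]
      exact norm_nonneg _
    have hne01 : cs' ⟨0, by omega⟩ ≠ cs' ⟨1, by omega⟩ := by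
      intro h
      have h6 := hBle _ _ hi01
      rw [h, sub_self, norm_zero] at h6
      exact absurd (lt_of_lt_of_le hBpos h6) (lt_irrefl 0)
    obtain ⟨z, hzN, hzd⟩ := near_nbd cs' (cs' ⟨1, by omega⟩) ⟨0, by omega⟩ ⟨1, by omega⟩
      hi01 hle1 hne01
    have hz2M : ‖z‖ ≤ 2 * M := by
      have hDn : ‖cs' (⟨1, by omega⟩ : Fin k) - cs' (⟨0, by omega⟩ : Fin k)‖
          = ‖cs' (⟨0, by omega⟩ : Fin k) - cs' (⟨1, by omega⟩ : Fin k)‖ := norm_sub_rev _ _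
      have hDpos : 0 < ‖cs' (⟨0, by omega⟩ : Fin k) - cs' (⟨1, by omega⟩ : Fin k)‖ := by
        rw [norm_pos_iff, sub_ne_zero]
        exact hne01
      have hD2M : ‖cs' (⟨0, by omega⟩ : Fin k) - cs' (⟨1, by omega⟩ : Fin k)‖ ≤ 2 * M := by
        refine (norm_sub_le _ _).trans ?_
        linarith [hcs'ball (⟨0, by omega⟩ : Fin k), hcs'ball (⟨1, by omega⟩ : Fin k)]
      have h11 : ‖cs' (⟨1, by omega⟩ : Fin k) - z‖ ≤ M := by
        refine hzd.trans ?_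
        rw [sub_self, norm_zero]
        rw [hDn]
        have : (0:ℝ) ^ 2 = 0 := by norm_num
        rw [this, sub_zero]
        rw [div_le_iff₀ (by positivity)]
        nlinarith
      have h12 : ‖z‖ ≤ ‖cs' (⟨1, by omega⟩ : Fin k)‖ + ‖cs' (⟨1, by omega⟩ : Fin k) - z‖ := by
        have h12' := norm_sub_le (cs' (⟨1, by omega⟩ : Fin k)) (cs' (⟨1, by omega⟩ : Fin k) - z)
        have heq : cs' (⟨1, by omega⟩ : Fin k) - (cs' (⟨1, by omega⟩ : Fin k) - z) = z := by abel
        rwa [heq] at h12'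
      linarith [hcs'ball (⟨1, by omega⟩ : Fin k)]
    have hsubs : closedBall (0:H) M ⊆ cthickening (3 * M) N := by
      intro x hx
      refine mem_cthickening_of_dist_le x z (3 * M) N hzN ?_
      rw [dist_eq_norm]
      have h13 : ‖x - z‖ ≤ ‖x‖ + ‖z‖ := norm_sub_le x z
      have hx' : ‖x‖ ≤ M := by rwa [Metric.mem_closedBall, dist_zero_right] at hx
      linarith
    have hP1 : P (cthickening (3 * M) N) = 1 := by
      refine le_antisymm prob_le_one ?_
      have h14 : P (closedBall (0:H) M) = 1 :=
        (prob_compl_eq_zero_iff measurableSet_closedBall).1 hmb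
      calc (1:ℝ≥0∞) = P (closedBall (0:H) M) := h14.symm
        _ ≤ P (cthickening (3 * M) N) := measure_mono hsubs
    have hpw3 : (1:ℝ) ≤ pweight k P (3 * M) := by
      refine le_csSup ⟨1, ?_⟩ ⟨cs', hcs'opt, ?_⟩
      · rintro p ⟨cc, -, rfl⟩
        exact htr1 _
      · rw [hP1]
        simp
    have hr3M : 3 * M ≤ r0 := by
      have h15 : d * (4 * s2 * M) ≤ B * r0 := (le_div_iff₀ (by positivity)).1 hd'
      have hgt : (12 * s2 * M) * (4 * s2 * M) ≤ d * (4 * s2 * M) :=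
        mul_le_mul_of_nonneg_right hdM.le (by positivity)
      have heq96 : (12 * s2 * M) * (4 * s2 * M) = 96 * M ^ 2 := by
        have he' : (12 * s2 * M) * (4 * s2 * M) = 48 * M ^ 2 * s2 ^ 2 := by ring
        rw [he', hs2sq]
        ring
      have hBr : B * r0 ≤ 2 * M * r0 := mul_le_mul_of_nonneg_right hB2M hr0.le
      nlinarith [hM]
    have h16 := hmarg (3 * M) (by positivity) hr3M
    have h17 : (1:ℝ) ≤ B * pm * (3 * M) / (128 * M ^ 2) := le_trans hpw3 h16
    rw [le_div_iff₀ (by positivity)] at h17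
    nlinarith [mul_le_mul hB2M hpm1 hpm0 (by linarith : (0:ℝ) ≤ 2 * M)]


end
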